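/- Let p, q, K, λ₁, λ₂, a₁, a₂ be real numbers with 1 ≤ p ≤ q, K ≥ 1, λ₁ > 0, λ₂ > 0, a₁ ≥ 0, a₂ ≥ 0, and suppose λ₁^p + a₁·λ₁^q = λ₂^p + a₂·λ₂^q. If either a₁·λ₁^q ≤ K·λ₁^p or a₁ ≤ 2·a₂, then λ₂ ≤ (2·(1+K))^(1/p)·λ₁. -/
import Mathlib

private lemma root_step (p C x y : ℝ) (hp : 1 ≤ p) (hC : 0 < C) (hx : 0 < x)
    (hy : 0 < y) (h : x ^ p ≤ C * y ^ p) : x ≤ C ^ (1 / p) * y := by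
  have hp0 : 0 < p := lt_of_lt_of_le one_pos hp
  have h1 : (x ^ p) ^ (1 / p) ≤ (C * y ^ p) ^ (1 / p) :=
    Real.rpow_le_rpow (Real.rpow_pos_of_pos hx p).le h (by positivity)
  rw [← Real.rpow_mul hx.le, mul_one_div_cancel hp0.ne', Real.rpow_one,
    Real.mul_rpow hC.le (Real.rpow_pos_of_pos hy p).le,
    ← Real.rpow_mul hy.le, mul_one_div_cancel hp0.ne', Real.rpow_one] at h1
  exact h1

/-- Comparison (eq : lambda_z_2 less than lambda_z_1) in Subsection 6.1:
if `λ₁^p + a₁·λ₁^q = λ₂^p + a₂·λ₂^q` and either the p-phase condition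
`a₁·λ₁^q ≤ K·λ₁^p` or the comparability `a₁ ≤ 2·a₂` holds, then
`λ₂ ≤ (2(1+K))^(1/p)·λ₁`. -/
theorem stmt_13 (p q K lam₁ lam₂ a₁ a₂ : ℝ)
    (hp : 1 ≤ p) (hpq : p ≤ q) (hK : 1 ≤ K)
    (hl₁ : 0 < lam₁) (hl₂ : 0 < lam₂) (ha₁ : 0 ≤ a₁) (ha₂ : 0 ≤ a₂)
    (hΛ : lam₁ ^ p + a₁ * lam₁ ^ q = lam₂ ^ p + a₂ * lam₂ ^ q)
    (hcase : a₁ * lam₁ ^ q ≤ K * lam₁ ^ p ∨ a₁ ≤ 2 * a₂) :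
    lam₂ ≤ (2 * (1 + K)) ^ (1 / p) * lam₁ := by
  have hC : (0:ℝ) < 2 * (1 + K) := by linarith
  have h1p : (0:ℝ) < lam₁ ^ p := Real.rpow_pos_of_pos hl₁ p
  have h2p : (0:ℝ) < lam₂ ^ p := Real.rpow_pos_of_pos hl₂ p
  have h1q : (0:ℝ) < lam₁ ^ q := Real.rpow_pos_of_pos hl₁ q
  have h2q : (0:ℝ) < lam₂ ^ q := Real.rpow_pos_of_pos hl₂ q
  have key : lam₂ ^ p ≤ 2 * (1 + K) * lam₁ ^ p := by
    rcases hcase with h | h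
    · nlinarith [mul_nonneg ha₂ h2q.le]
    · rcases le_or_gt lam₂ lam₁ with hle | hlt
      · have : lam₂ ^ p ≤ lam₁ ^ p :=
          Real.rpow_le_rpow hl₂.le hle (by linarith)
        nlinarith
      · -- lam₁ < lam₂
        have hdiv : (lam₁ / lam₂) ^ q ≤ (lam₁ / lam₂) ^ p :=
          Real.rpow_le_rpow_of_exponent_ge (by positivity)
            (by rw [div_le_one hl₂]; linarith) hpq
        rw [Real.div_rpow hl₁.le hl₂.le, Real.div_rpow hl₁.le hl₂.le,
          div_le_div_iff₀ h2q h2p] at hdiv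
        -- hdiv : lam₁^q * lam₂^p ≤ lam₁^p * lam₂^q
        have hcross : a₂ * lam₁ ^ q * lam₂ ^ p ≤ a₂ * lam₂ ^ q * lam₁ ^ p := by
          nlinarith
        have h0 : lam₂ ^ p + a₂ * lam₂ ^ q ≤ lam₁ ^ p + 2 * a₂ * lam₁ ^ q := by
          nlinarith
        have h1 : lam₂ ^ p * (lam₂ ^ p + a₂ * lam₂ ^ q) ≤
            2 * lam₁ ^ p * (lam₂ ^ p + a₂ * lam₂ ^ q) := by
          nlinarith [mul_le_mul_of_nonneg_left h0 h2p.le, hcross,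
            mul_nonneg ha₂ h2q.le]
        have hpos : 0 < lam₂ ^ p + a₂ * lam₂ ^ q := by positivity
        have h2 : lam₂ ^ p ≤ 2 * lam₁ ^ p := le_of_mul_le_mul_right h1 hpos
        nlinarith
  exact root_step p (2 * (1 + K)) lam₂ lam₁ hp hC hl₂ hl₁ key
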